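/- Let X be a geodesic Gromov-hyperbolic metric space with basepoint z_0. For any bounded subset B of Isom(X) and for each β > 0, there exists N ≥ 1 such that the following holds: for any b_1, …, b_n ∈ B with n ≥ N, setting g_i := b_1⋯b_i and r_i := b_{i+1}⋯b_n, for every r ∈ [τ(g_n), d(z_0, g_n·z_0)] there exists an index i with |d(r_i g_i·z_0, z_0) − r| ≤ βn. -/

import Mathlib

open MeasureTheory ProbabilityTheory Filter Topology Pointwise

noncomputable section

namespace BMS

/-- The Gromov product `(y,z)_x := (d(y,x) + d(z,x) - d(y,z))/2`. -/
def gp {X : Type*} [MetricSpace X] (x y z : X) : ℝ :=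
  (dist y x + dist z x - dist y z) / 2

/-- `X` is `δ`-hyperbolic. -/
def HypWith (δ : ℝ) (X : Type*) [MetricSpace X] : Prop :=
  ∀ x₀ x₁ x₂ x₃ : X, min (gp x₀ x₃ x₁) (gp x₀ x₃ x₂) - δ ≤ gp x₀ x₁ x₂

/-- `X` is Gromov-hyperbolic. -/
def GromovHyperbolic (X : Type*) [MetricSpace X] : Prop :=
  ∃ δ : ℝ, 0 < δ ∧ HypWith δ X

/-- `X` is a geodesic metric space: any two points are joined by an isometrically
parametrized path. -/
def GeodesicSpace (X : Type*) [MetricSpace X] : Prop :=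
  ∀ x y : X, ∃ f : ℝ → X, f 0 = x ∧ f (dist x y) = y ∧
    ∀ s ∈ Set.Icc (0 : ℝ) (dist x y), ∀ t ∈ Set.Icc (0 : ℝ) (dist x y),
      dist (f s) (f t) = |s - t|

/-- The action of `Γ` on `X` is by isometries. -/
def IsIsomAction (Γ X : Type*) [Group Γ] [MetricSpace X] [MulAction Γ X] : Prop :=
  ∀ (g : Γ) (x y : X), dist (g • x) (g • y) = dist x y

/-- The positions of the random walk: `walk ω n = ω 1 * ⋯ * ω n`. -/
def walk {Γ Ω : Type*} [Group Γ] (ω : ℕ → Ω → Γ) : ℕ → Ω → Γ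
  | 0 => fun _ => 1
  | n + 1 => fun ρ => walk ω n ρ * ω (n + 1) ρ

/-- Extended-real valued logarithm of an extended nonnegative real, with `elog 0 = ⊥`. -/
def elog (x : ENNReal) : EReal :=
  if x = 0 then ⊥ else ((Real.log x.toReal : ℝ) : EReal)

/-- `(1/n)·log P(Z n ∈ R)`, as an extended real number. -/
def logProbRate {Ω : Type*} [MeasurableSpace Ω] (P : Measure Ω) (Z : ℕ → Ω → ℝ)
    (R : Set ℝ) (n : ℕ) : EReal :=
  (((n : ℝ)⁻¹ : ℝ) : EReal) * elog (P {ρ | Z n ρ ∈ R})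

/-- The sequence of real random variables `Z n` satisfies a (full) large deviation
principle under `P` with rate function `I`. -/
def HasLDP {Ω : Type*} [MeasurableSpace Ω] (P : Measure Ω) (Z : ℕ → Ω → ℝ)
    (I : ℝ → ENNReal) : Prop :=
  LowerSemicontinuous I ∧
  ∀ R : Set ℝ, MeasurableSet R →
    (-(⨅ α ∈ interior R, ((I α : EReal))) ≤ liminf (logProbRate P Z R) atTop ∧
      limsup (logProbRate P Z R) atTop ≤ -(⨅ α ∈ closure R, ((I α : EReal))))

/-- Weak large deviation principle: the lower bound holds for all measurable sets and
the upper bound for bounded measurable sets. -/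
def HasWeakLDP {Ω : Type*} [MeasurableSpace Ω] (P : Measure Ω) (Z : ℕ → Ω → ℝ)
    (I : ℝ → ENNReal) : Prop :=
  LowerSemicontinuous I ∧
  ∀ R : Set ℝ, MeasurableSet R →
    (-(⨅ α ∈ interior R, ((I α : EReal))) ≤ liminf (logProbRate P Z R) atTop ∧
      (Bornology.IsBounded R →
        limsup (logProbRate P Z R) atTop ≤ -(⨅ α ∈ closure R, ((I α : EReal)))))

/-- Convexity of an `[0,∞]`-valued function on `ℝ`. -/
def ConvexRate (I : ℝ → ENNReal) : Prop :=
  ∀ x y t : ℝ, 0 ≤ t → t ≤ 1 →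
    I (t * x + (1 - t) * y) ≤ ENNReal.ofReal t * I x + ENNReal.ofReal (1 - t) * I y

/-- A rate function is proper if its sublevel sets are compact. -/
def ProperRate (I : ℝ → ENNReal) : Prop :=
  ∀ c : ENNReal, c ≠ ⊤ → IsCompact {x : ℝ | I x ≤ c}

/-- The support of a measure on a countable discrete space. -/
def measSupport {Γ : Type*} [MeasurableSpace Γ] (μ : Measure Γ) : Set Γ :=
  {g | μ {g} ≠ 0}

/-- `S` is a Schottky set with respect to the basepoint `z0`. -/
def IsSchottky {Γ X : Type*} [Group Γ] [MetricSpace X] [MulAction Γ X]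
    (z0 : X) (S : Set Γ) : Prop :=
  S.Finite ∧ S.Nonempty ∧ ∃ C : ℝ, 0 < C ∧ ∀ y z : X,
    (2 / 3 : ℝ) * (S.ncard : ℝ) ≤ (({s ∈ S | gp z0 y (s • z) ≤ C} : Set Γ).ncard : ℝ)

/-- `u : ℤ → X` is a quasi-geodesic. -/
def QuasiGeodZ {X : Type*} [MetricSpace X] (u : ℤ → X) : Prop :=
  ∃ lam C : ℝ, 1 ≤ lam ∧ 0 ≤ C ∧ ∀ m n : ℤ,
    lam⁻¹ * |(m : ℝ) - (n : ℝ)| - C ≤ dist (u m) (u n) ∧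
      dist (u m) (u n) ≤ lam * |(m : ℝ) - (n : ℝ)| + C

/-- `g` is a loxodromic isometry: some (equivalently, any) orbit map `n ↦ g^n • x`
is a quasi-geodesic. -/
def IsLoxodromic (X : Type*) {Γ : Type*} [MetricSpace X] [Group Γ] [MulAction Γ X]
    (g : Γ) : Prop :=
  ∃ x : X, QuasiGeodZ (fun n : ℤ => (g ^ n) • x)

/-- The forward (`s = true`) or backward (`s = false`) orbit ray of `g` from `z0`. -/
def raySeq {Γ X : Type*} [Group Γ] [MetricSpace X] [MulAction Γ X]
    (z0 : X) (g : Γ) (s : Bool) : ℕ → X :=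
  fun n => (g ^ (if s then (n : ℤ) else -(n : ℤ))) • z0

/-- Two sequences define the same point of the Gromov boundary. -/
def SameEnd {X : Type*} [MetricSpace X] (z0 : X) (u v : ℕ → X) : Prop :=
  Tendsto (fun n => gp z0 (u n) (v n)) atTop atTop

/-- `g` and `h` are independent loxodromic elements: both are loxodromic and their
four boundary fixed points are pairwise distinct. -/
def IndepLox {Γ X : Type*} [Group Γ] [MetricSpace X] [MulAction Γ X]
    (z0 : X) (g h : Γ) : Prop :=
  IsLoxodromic X g ∧ IsLoxodromic X h ∧
  (¬ SameEnd z0 (raySeq z0 g true) (raySeq z0 g false)) ∧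
  (¬ SameEnd z0 (raySeq z0 h true) (raySeq z0 h false)) ∧
  (∀ s t : Bool, ¬ SameEnd z0 (raySeq z0 g s) (raySeq z0 h t))

/-- A set `B` of isometries is non-elementary: the subsemigroup it generates contains
two independent loxodromic elements. -/
def NonElementarySet {Γ X : Type*} [Group Γ] [MetricSpace X] [MulAction Γ X]
    (z0 : X) (B : Set Γ) : Prop :=
  ∃ g h : Γ, g ∈ Subsemigroup.closure B ∧ h ∈ Subsemigroup.closure B ∧ IndepLox z0 g h

/-- A probability measure is non-elementary if its support is. -/
def NonElementary {Γ X : Type*} [Group Γ] [MeasurableSpace Γ] [MetricSpace X] [MulAction Γ X]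
    (z0 : X) (μ : Measure Γ) : Prop :=
  NonElementarySet z0 (measSupport μ)

/-- The translation length `τ(g) := inf_x d(x, g•x)`. -/
def translationLength (X : Type*) {Γ : Type*} [MetricSpace X] [Group Γ] [MulAction Γ X]
    (g : Γ) : ℝ :=
  ⨅ x : X, dist x (g • x)

/-- The asymptotic (stable) translation length `ℓ(g) = lim_n d(g^n • z0, z0)/n`;
by Fekete's subadditivity lemma the limit equals the infimum over `n ≥ 1`. -/
def stableLength {Γ X : Type*} [Group Γ] [MetricSpace X] [MulAction Γ X]
    (z0 : X) (g : Γ) : ℝ :=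
  ⨅ n : ℕ, dist ((g ^ (n + 1)) • z0) z0 / (n + 1)

/-- `B` is non-arithmetic: some power `B^n` contains two elements with different
asymptotic translation lengths. -/
def NonArithmetic {Γ X : Type*} [Group Γ] [MetricSpace X] [MulAction Γ X]
    (z0 : X) (B : Set Γ) : Prop :=
  ∃ (n : ℕ) (g₁ g₂ : Γ), g₁ ∈ B ^ n ∧ g₂ ∈ B ^ n ∧
    stableLength z0 g₁ ≠ stableLength z0 g₂

/-- `sup_{g ∈ B^n} d(g•z0, z0)`, valued in `[0,∞]`. -/
def dispSup {Γ X : Type*} [Group Γ] [MetricSpace X] [MulAction Γ X]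
    (z0 : X) (B : Set Γ) (n : ℕ) : ENNReal :=
  ⨆ g ∈ B ^ n, ENNReal.ofReal (dist (g • z0) z0)

/-- `inf_{g ∈ B^n} d(g•z0, z0)`, valued in `[0,∞]`. -/
def dispInf {Γ X : Type*} [Group Γ] [MetricSpace X] [MulAction Γ X]
    (z0 : X) (B : Set Γ) (n : ℕ) : ENNReal :=
  ⨅ g ∈ B ^ n, ENNReal.ofReal (dist (g • z0) z0)

/-- `μ` has a finite exponential moment:
`E[exp (λ·d(z0, ω 1 • z0))] < ∞` for some `λ > 0`. -/
def FiniteExpMoment {Γ Ω X : Type*} [Group Γ] [MetricSpace X] [MulAction Γ X]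
    [MeasurableSpace Ω] (P : Measure Ω) (ω : ℕ → Ω → Γ) (z0 : X) : Prop :=
  ∃ lam : ℝ, 0 < lam ∧
    Integrable (fun ρ => Real.exp (lam * dist ((ω 1 ρ) • z0) z0)) P

/-- The increments `ω i` are i.i.d. with common law `μ`. -/
def IIDWalk {Γ Ω : Type*} [Group Γ] [MeasurableSpace Γ] [MeasurableSpace Ω]
    (P : Measure Ω) (ω : ℕ → Ω → Γ) (μ : Measure Γ) : Prop :=
  (∀ i, Measurable (ω i)) ∧
  iIndepFun ω P ∧
  ∀ i, P.map (ω i) = μ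

/-- `-(1/n)·log P(d(z_n, z0) ≤ a·n)`. -/
def belowRate {Γ Ω X : Type*} [Group Γ] [MetricSpace X] [MulAction Γ X]
    [MeasurableSpace Ω] (P : Measure Ω) (ω : ℕ → Ω → Γ) (z0 : X) (a : ℝ) (n : ℕ) : EReal :=
  -((((n : ℝ)⁻¹ : ℝ) : EReal) * elog (P {ρ | dist ((walk ω n ρ) • z0) z0 ≤ a * n}))

/-- `-(1/n)·log P(d(z_n, z0) ≥ a·n)`. -/
def aboveRate {Γ Ω X : Type*} [Group Γ] [MetricSpace X] [MulAction Γ X]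
    [MeasurableSpace Ω] (P : Measure Ω) (ω : ℕ → Ω → Γ) (z0 : X) (a : ℝ) (n : ℕ) : EReal :=
  -((((n : ℝ)⁻¹ : ℝ) : EReal) * elog (P {ρ | a * n ≤ dist ((walk ω n ρ) • z0) z0}))

end BMS
namespace BMS

/-- `prodFrom b j m = b (j+1) * ⋯ * b (j+m)`. -/
def prodFrom {Γ : Type*} [Group Γ] (b : ℕ → Γ) (j : ℕ) : ℕ → Γ
  | 0 => 1
  | k + 1 => prodFrom b j k * b (j + k + 1)

section AuxProofs

variable {X : Type*} [MetricSpace X] {Γ : Type*} [Group Γ] [MulAction Γ X]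

lemma gp_comm (x y z : X) : gp x y z = gp x z y := by
  unfold gp
  rw [dist_comm y z]
  ring

lemma prodFrom_add (b : ℕ → Γ) (j k : ℕ) :
    ∀ m, prodFrom b j (k + m) = prodFrom b j k * prodFrom b (j + k) m
  | 0 => by simp [prodFrom]
  | m + 1 => by
    have e : j + (k + m) + 1 = j + k + m + 1 := by omega
    show prodFrom b j ((k + m) + 1) = _
    simp only [prodFrom]
    rw [prodFrom_add b j k m, mul_assoc, e]

lemma tl_nonneg (g : Γ) : 0 ≤ translationLength X g :=
  Real.iInf_nonneg fun _ => dist_nonneg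

lemma disp_lip (hiso : IsIsomAction Γ X) (g : Γ) (x x' : X) :
    |dist (g • x') x' - dist (g • x) x| ≤ 2 * dist x x' := by
  have t1 : dist (g • x') x' ≤ dist (g • x') (g • x) + dist (g • x) x + dist x x' :=
    dist_triangle4 _ _ _ _
  have t2 : dist (g • x) x ≤ dist (g • x) (g • x') + dist (g • x') x' + dist x' x :=
    dist_triangle4 _ _ _ _
  have e1 : dist (g • x') (g • x) = dist x' x := hiso g x' x
  have e2 : dist (g • x) (g • x') = dist x x' := hiso g x x'
  have e3 : dist x' x = dist x x' := dist_comm x' x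
  rw [abs_le]
  constructor <;> linarith

/-- A point `p` which is `δ`-close (in Gromov product) to a pair `u, w` is `4δ`-close
to any geodesic from `u` to `w`. -/
lemma near_geo {δ : ℝ} (hδ : 0 < δ) (hh : HypWith δ X) (u w p : X)
    (h : ℝ → X) (h0 : h 0 = u) (hd : h (dist u w) = w)
    (hI : ∀ s ∈ Set.Icc (0:ℝ) (dist u w), ∀ t ∈ Set.Icc (0:ℝ) (dist u w),
      dist (h s) (h t) = |s - t|)
    (hp : gp p u w ≤ δ) :
    ∃ t ∈ Set.Icc (0:ℝ) (dist u w), dist p (h t) ≤ 4 * δ := by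
  have hDnn : (0:ℝ) ≤ dist u w := dist_nonneg
  by_cases hsle : dist u p ≤ dist u w
  · refine ⟨dist u p, ⟨dist_nonneg, hsle⟩, ?_⟩
    have hq0 : dist u (h (dist u p)) = dist u p := by
      have := hI 0 ⟨le_refl 0, hDnn⟩ (dist u p) ⟨dist_nonneg, hsle⟩
      rw [h0] at this
      rw [this, zero_sub, abs_neg, abs_of_nonneg dist_nonneg]
    have hqw : dist w (h (dist u p)) = dist u w - dist u p := by
      have := hI (dist u w) ⟨hDnn, le_refl _⟩ (dist u p) ⟨dist_nonneg, hsle⟩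
      rw [hd] at this
      rw [this, abs_of_nonneg (by linarith)]
    have hyp := hh u p (h (dist u p)) w
    simp only [gp] at hyp hp
    have c1 : dist w u = dist u w := dist_comm w u
    have c2 : dist p u = dist u p := dist_comm p u
    have c3 : dist (h (dist u p)) u = dist u p := by rw [dist_comm]; exact hq0
    have c4 : dist w (h (dist u p)) = dist u w - dist u p := hqw
    rcases min_cases ((dist w u + dist p u - dist w p) / 2)
        ((dist w u + dist (h (dist u p)) u - dist w (h (dist u p))) / 2) with
      ⟨hm, _⟩ | ⟨hm, _⟩ <;> rw [hm] at hyp <;> linarith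
  · refine ⟨dist u w, ⟨hDnn, le_refl _⟩, ?_⟩
    rw [hd]
    simp only [gp] at hp
    push_neg at hsle
    have : dist p w = dist w p := dist_comm p w
    linarith

/-- Any point on a geodesic joining the endpoints of a chain with steps `≤ M` is within
`4δ·k + M` of the chain, where the chain has at most `2^k` steps. -/
lemma chain_lemma {δ M : ℝ} (hδ : 0 < δ) (hh : HypWith δ X) (hgeo : GeodesicSpace X)
    (hM : 0 ≤ M) :
    ∀ (k n : ℕ), n ≤ 2 ^ k → ∀ x : ℕ → X, (∀ i, i < n → dist (x i) (x (i+1)) ≤ M) →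
    ∀ f : ℝ → X, f 0 = x 0 → f (dist (x 0) (x n)) = x n →
    (∀ s ∈ Set.Icc (0:ℝ) (dist (x 0) (x n)), ∀ t ∈ Set.Icc (0:ℝ) (dist (x 0) (x n)),
      dist (f s) (f t) = |s - t|) →
    ∀ s ∈ Set.Icc (0:ℝ) (dist (x 0) (x n)),
    ∃ i ≤ n, dist (f s) (x i) ≤ 4 * δ * k + M := by
  intro k
  induction k with
  | zero =>
    intro n hn x hx f hf0 hfd hfI s hsmem
    refine ⟨0, Nat.zero_le _, ?_⟩
    have h1 : dist (f s) (x 0) = s := by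
      rw [← hf0, hfI s hsmem 0 ⟨le_refl 0, dist_nonneg⟩, sub_zero, abs_of_nonneg hsmem.1]
    have h2 : dist (x 0) (x n) ≤ M := by
      norm_num at hn
      interval_cases n
      · simp [hM]
      · exact hx 0 (by norm_num)
    have := hsmem.2
    push_cast
    linarith
  | succ k ih =>
    intro n hn x hx f hf0 hfd hfI s hsmem
    set j := (n + 1) / 2 with hj
    have hjn : j ≤ n := by omega
    have hj1 : j ≤ 2 ^ k := by rw [pow_succ] at hn; omega
    have hj2 : n - j ≤ 2 ^ k := by rw [pow_succ] at hn; omega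
    have hd0 : dist (x 0) (f s) = s := by
      have := hfI 0 ⟨le_refl 0, le_trans hsmem.1 hsmem.2⟩ s hsmem
      rw [hf0] at this
      rw [this, zero_sub, abs_neg, abs_of_nonneg hsmem.1]
    have hdn : dist (x n) (f s) = dist (x 0) (x n) - s := by
      have := hfI (dist (x 0) (x n)) ⟨le_trans hsmem.1 hsmem.2, le_refl _⟩ s hsmem
      rw [hfd] at this
      rw [this, abs_of_nonneg (by linarith [hsmem.2])]
    have hmin : min (gp (f s) (x j) (x 0)) (gp (f s) (x j) (x n)) ≤ δ := by
      have hyp := hh (f s) (x 0) (x n) (x j)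
      have hz : gp (f s) (x 0) (x n) = 0 := by
        simp only [gp]
        rw [hd0, hdn]
        ring
      linarith
    rcases min_le_iff.mp hmin with hc | hc
    · -- close to the first half geodesic
      obtain ⟨g1, hg10, hg1d, hg1I⟩ := hgeo (x 0) (x j)
      rw [gp_comm] at hc
      obtain ⟨t, htmem, htle⟩ := near_geo hδ hh (x 0) (x j) (f s) g1 hg10 hg1d hg1I hc
      obtain ⟨i, hin, hile⟩ := ih j hj1 x (fun i hi => hx i (lt_of_lt_of_le hi hjn))
        g1 hg10 hg1d hg1I t htmem
      refine ⟨i, le_trans hin hjn, ?_⟩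
      have htri : dist (f s) (x i) ≤ dist (f s) (g1 t) + dist (g1 t) (x i) :=
        dist_triangle _ _ _
      push_cast
      push_cast at hile
      linarith
    · -- close to the second half geodesic
      obtain ⟨g2, hg20, hg2d, hg2I⟩ := hgeo (x j) (x n)
      obtain ⟨t, htmem, htle⟩ := near_geo hδ hh (x j) (x n) (f s) g2 hg20 hg2d hg2I hc
      have e : j + (n - j) = n := by omega
      obtain ⟨i, hin, hile⟩ := ih (n - j) hj2 (fun i => x (j + i))
        (fun i hi => by
          have := hx (j + i) (by omega)
          have e' : j + (i + 1) = (j + i) + 1 := by omega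
          simpa [e'] using this)
        g2 (by simp only [Nat.add_zero]; exact hg20)
        (by simp only [Nat.add_zero, e]; exact hg2d)
        (by simp only [Nat.add_zero, e]; exact hg2I)
        t (by simp only [Nat.add_zero, e]; exact htmem)
      refine ⟨j + i, by omega, ?_⟩
      have htri : dist (f s) (x (j + i)) ≤ dist (f s) (g2 t) + dist (g2 t) (x (j + i)) :=
        dist_triangle _ _ _
      have hile' : dist (g2 t) (x (j + i)) ≤ 4 * δ * k + M := hile
      push_cast
      push_cast at hile'
      linarith

/-- Two-step displacement bound: `d(z0, g²z0) ≤ d(z0, gz0) + τ(g) + 4δ`. -/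
lemma two_step (hiso : IsIsomAction Γ X) {δ : ℝ} (hδ : 0 < δ) (hh : HypWith δ X)
    (z0 : X) (g : Γ) :
    dist z0 (g • (g • z0)) ≤ dist z0 (g • z0) + translationLength X g + 4 * δ := by
  have : Nonempty X := ⟨z0⟩
  apply le_of_forall_pos_le_add
  intro ε hε
  obtain ⟨y, hy⟩ : ∃ y : X, dist y (g • y) < translationLength X g + ε := by
    apply exists_lt_of_ciInf_lt
    show translationLength X g < _
    linarith [tl_nonneg (X := X) g]
  have E1 : dist (g • (g • z0)) (g • z0) = dist z0 (g • z0) := by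
    rw [hiso g (g • z0) z0, dist_comm]
  have E2 : dist (g • y) (g • z0) = dist y z0 := hiso g y z0
  have E4 : dist (g • y) (g • (g • z0)) = dist y (g • z0) := hiso g y (g • z0)
  have T : dist z0 (g • z0) ≤ dist z0 y + dist y (g • z0) := dist_triangle _ _ _
  have T' : dist z0 y = dist y z0 := dist_comm _ _
  have Lb1 : dist y (g • z0) ≤ dist y (g • y) + dist y z0 := by
    have := dist_triangle y (g • y) (g • z0)
    rw [E2] at this
    linarith
  have Lb2 : dist y z0 ≤ dist (g • y) y + dist y (g • z0) := by
    have := dist_triangle (g • y) y (g • z0)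
    rw [← E2]
    linarith
  have cgy : dist (g • y) y = dist y (g • y) := dist_comm _ _
  have h1 := hh (g • z0) z0 (g • (g • z0)) (g • y)
  have h2 := hh (g • z0) (g • y) z0 y
  simp only [gp] at h1 h2
  rcases min_cases ((dist (g • y) (g • z0) + dist z0 (g • z0) - dist (g • y) z0) / 2)
      ((dist (g • y) (g • z0) + dist (g • (g • z0)) (g • z0) - dist (g • y) (g • (g • z0))) / 2)
    with ⟨hm1, _⟩ | ⟨hm1, _⟩ <;> rw [hm1] at h1
  · rcases min_cases ((dist y (g • z0) + dist (g • y) (g • z0) - dist y (g • y)) / 2)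
        ((dist y (g • z0) + dist z0 (g • z0) - dist y z0) / 2)
      with ⟨hm2, _⟩ | ⟨hm2, _⟩ <;> rw [hm2] at h2 <;> linarith
  · linarith

/-- Midpoint displacement bound: the midpoint `m` of a geodesic from `z0` to `g•z0`
satisfies `d(m, g•m) ≤ τ(g) + 8δ`. -/
lemma midpoint_disp (hiso : IsIsomAction Γ X) {δ : ℝ} (hδ : 0 < δ) (hh : HypWith δ X)
    (z0 : X) (g : Γ) (f : ℝ → X)
    (hf0 : f 0 = z0) (hfd : f (dist z0 (g • z0)) = g • z0)
    (hfI : ∀ s ∈ Set.Icc (0:ℝ) (dist z0 (g • z0)), ∀ t ∈ Set.Icc (0:ℝ) (dist z0 (g • z0)),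
      dist (f s) (f t) = |s - t|) :
    dist (f (dist z0 (g • z0) / 2)) (g • f (dist z0 (g • z0) / 2)) ≤
      translationLength X g + 8 * δ := by
  set D := dist z0 (g • z0) with hD
  have hDnn : (0:ℝ) ≤ D := dist_nonneg
  have hmem : D / 2 ∈ Set.Icc (0:ℝ) D := ⟨by linarith, by linarith⟩
  set m := f (D / 2) with hm
  have F1 : dist z0 m = D / 2 := by
    have := hfI 0 ⟨le_refl 0, hDnn⟩ (D / 2) hmem
    rw [hf0] at this
    rw [this, zero_sub, abs_neg, abs_of_nonneg (by linarith)]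
  have F2 : dist (g • z0) m = D / 2 := by
    have := hfI D ⟨hDnn, le_refl _⟩ (D / 2) hmem
    rw [hfd] at this
    rw [this, abs_of_nonneg (by linarith)]
    ring
  have C1 : dist z0 m = D / 2 := F1
  have C2 : dist m (g • z0) = D / 2 := by rw [dist_comm]; exact F2
  have C3 : dist (g • m) (g • z0) = D / 2 := by
    rw [hiso g m z0, dist_comm]; exact F1
  have C4 : dist (g • (g • z0)) (g • z0) = D := by
    rw [hiso g (g • z0) z0, dist_comm]
  have C5 : dist (g • (g • z0)) z0 = dist z0 (g • (g • z0)) := dist_comm _ _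
  have C6 : dist (g • (g • z0)) (g • m) = D / 2 := by
    rw [hiso g (g • z0) m]; exact F2
  have stepB : dist z0 (g • (g • z0)) ≤ D + translationLength X g + 4 * δ :=
    two_step hiso hδ hh z0 g
  have htl : 0 ≤ translationLength X g := tl_nonneg g
  have h1 := hh (g • z0) m (g • m) z0
  have h2 := hh (g • z0) z0 (g • m) (g • (g • z0))
  simp only [gp] at h1 h2
  rcases min_cases ((dist z0 (g • z0) + dist m (g • z0) - dist z0 m) / 2)
      ((dist z0 (g • z0) + dist (g • m) (g • z0) - dist z0 (g • m)) / 2)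
    with ⟨hm1, _⟩ | ⟨hm1, _⟩ <;> rw [hm1] at h1
  · linarith
  · rcases min_cases ((dist (g • (g • z0)) (g • z0) + dist z0 (g • z0) - dist (g • (g • z0)) z0) / 2)
        ((dist (g • (g • z0)) (g • z0) + dist (g • m) (g • z0) - dist (g • (g • z0)) (g • m)) / 2)
      with ⟨hm2, _⟩ | ⟨hm2, _⟩ <;> rw [hm2] at h2 <;> linarith

/-- Discrete intermediate value theorem. -/
lemma ivt (r E C : ℝ) (hE : 0 ≤ E) :
    ∀ (m : ℕ) (F : ℕ → ℝ), r ≤ F 0 → F m ≤ r + E → (∀ j, j < m → |F (j+1) - F j| ≤ C) →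
    ∃ i ≤ m, |F i - r| ≤ max E C := by
  intro m
  induction m with
  | zero =>
    intro F h0 hm _
    refine ⟨0, le_refl 0, ?_⟩
    rw [abs_of_nonneg (by linarith)]
    exact le_trans (by linarith) (le_max_left E C)
  | succ m ih =>
    intro F h0 hm hstep
    by_cases h1 : r ≤ F 1
    · obtain ⟨i, him, hi⟩ := ih (fun i => F (i + 1)) h1 hm (fun j hj => hstep (j + 1) (by omega))
      exact ⟨i + 1, by omega, hi⟩
    · push_neg at h1
      refine ⟨0, Nat.zero_le _, ?_⟩
      have hs := hstep 0 (Nat.succ_pos m)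
      have habs : F 0 - F 1 ≤ |F 1 - F 0| := by
        rw [abs_sub_comm]; exact le_abs_self _
      rw [abs_of_nonneg (by linarith)]
      exact le_trans (by linarith) (le_max_right E C)

lemma sq_le_pow : ∀ L : ℕ, L * L ≤ 2 ^ (L + 1) := by
  intro L
  induction L with
  | zero => norm_num
  | succ L ih =>
    by_cases hL : L < 3
    · interval_cases L <;> norm_num
    · push_neg at hL
      have h2 : (L + 1) * (L + 1) ≤ 2 * (L * L) := by nlinarith
      calc (L + 1) * (L + 1) ≤ 2 * (L * L) := h2
        _ ≤ 2 * 2 ^ (L + 1) := by omega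
        _ = 2 ^ (L + 1 + 1) := by rw [pow_succ]; ring

lemma clog_linear (A B β : ℝ) (hA : 0 ≤ A) (hB : 0 ≤ B) (hβ : 0 < β) :
    ∃ N : ℕ, 1 ≤ N ∧ ∀ n : ℕ, N ≤ n → A + B * (Nat.clog 2 n : ℝ) ≤ β * n := by
  obtain ⟨L1, hL1⟩ := exists_nat_ge ((A + 4 * B) / β)
  refine ⟨2 ^ (L1 + 2), Nat.one_le_two_pow, fun n hn => ?_⟩
  have hn0 : n ≠ 0 := by
    have : (1:ℕ) ≤ 2 ^ (L1 + 2) := Nat.one_le_two_pow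
    omega
  set L := Nat.log 2 n with hL
  have hLL : L1 + 2 ≤ L := by
    calc L1 + 2 = Nat.log 2 (2 ^ (L1 + 2)) := (Nat.log_pow one_lt_two _).symm
      _ ≤ L := Nat.log_mono_right hn
  have hclog : Nat.clog 2 n ≤ L + 1 :=
    (Nat.clog_le_iff_le_pow one_lt_two).mpr (le_of_lt (Nat.lt_pow_succ_log_self one_lt_two n))
  have hpow : (2:ℕ) ^ L ≤ n := Nat.pow_log_le_self 2 hn0
  have hq : (L:ℝ) * L ≤ 2 * 2 ^ L := by
    have := sq_le_pow L
    have h' : ((L * L : ℕ) : ℝ) ≤ ((2 ^ (L + 1) : ℕ) : ℝ) := Nat.cast_le.mpr this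
    push_cast at h'
    rw [pow_succ] at h'
    linarith
  have hL2 : (2:ℝ) ≤ (L:ℝ) := by
    have : 2 ≤ L := by omega
    exact_mod_cast this
  have hLb : (A + 4 * B) / β ≤ (L:ℝ) := by
    refine le_trans hL1 ?_
    have : L1 ≤ L := by omega
    exact_mod_cast this
  have h1 : A + 4 * B ≤ β * L := by
    rw [div_le_iff₀ hβ] at hLb
    linarith
  have hLnn : (0:ℝ) ≤ (L:ℝ) := by positivity
  have s1 : A + B * ((L:ℝ) + 1) ≤ (A + 4 * B) * L / 2 := by
    nlinarith [mul_nonneg hA (by linarith : (0:ℝ) ≤ (L:ℝ) - 2),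
      mul_nonneg hB (by linarith : (0:ℝ) ≤ (L:ℝ) - 1)]
  have s2 : (A + 4 * B) * L / 2 ≤ β * ((L:ℝ) * L) / 2 := by
    nlinarith [mul_nonneg (by linarith : (0:ℝ) ≤ β * L - (A + 4 * B)) hLnn]
  have s3 : β * ((L:ℝ) * L) / 2 ≤ β * 2 ^ L := by
    nlinarith [hq, hβ.le]
  have s4 : ((2:ℝ)) ^ L ≤ (n:ℝ) := by exact_mod_cast hpow
  have sc : B * (Nat.clog 2 n : ℝ) ≤ B * ((L:ℝ) + 1) := by
    apply mul_le_mul_of_nonneg_left _ hB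
    have := hclog
    push_cast
    exact_mod_cast this
  have : β * (2:ℝ) ^ L ≤ β * n := by nlinarith
  linarith

end AuxProofs

/-- **Proposition (finding displacements among cyclic permutations).** For any bounded
subset `B` of isometries of a geodesic Gromov-hyperbolic space and each `β > 0` there
exists `N ≥ 1` such that for all `n ≥ N` and `b_1, …, b_n ∈ B`, setting
`g_i = b_1⋯b_i` and `r_i = b_{i+1}⋯b_n`, for every `r ∈ [τ(g_n), d(z0, g_n•z0)]` there
is an index `i` with `|d(r_i g_i • z0, z0) - r| ≤ βn`. -/
theorem cyclic_permutation_displacement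
    {X : Type*} [MetricSpace X] {Γ : Type*} [Group Γ] [MulAction Γ X]
    (hiso : IsIsomAction Γ X) (hgeo : GeodesicSpace X) (hhyp : GromovHyperbolic X)
    (z0 : X) (B : Set Γ)
    (hbdd : ∃ M : ℝ, ∀ g ∈ B, dist (g • z0) z0 ≤ M) :
    ∀ β : ℝ, 0 < β → ∃ N : ℕ, 1 ≤ N ∧
      ∀ n : ℕ, N ≤ n → ∀ b : ℕ → Γ, (∀ i : ℕ, 1 ≤ i → i ≤ n → b i ∈ B) →
        ∀ r : ℝ, translationLength X (prodFrom b 0 n) ≤ r →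
          r ≤ dist z0 ((prodFrom b 0 n) • z0) →
          ∃ i : ℕ, i ≤ n ∧
            |dist ((prodFrom b i (n - i) * prodFrom b 0 i) • z0) z0 - r| ≤ β * n := by
  obtain ⟨M, hM⟩ := hbdd
  obtain ⟨δ, hδ, hh⟩ := hhyp
  intro β hβ
  set M0 := max M 0 with hM0def
  have hM0nn : (0:ℝ) ≤ M0 := le_max_right M 0
  obtain ⟨N, hN1, hN⟩ := clog_linear (8 * δ + 2 * M0) (8 * δ) β
    (by linarith) (by linarith) hβ
  refine ⟨N, hN1, ?_⟩
  intro n hn b hb r hr1 hr2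
  set g := prodFrom b 0 n with hg
  set x : ℕ → X := fun i => (prodFrom b 0 i) • z0 with hx
  have hx0 : x 0 = z0 := by
    show (prodFrom b 0 0) • z0 = z0
    show (1 : Γ) • z0 = z0
    exact one_smul _ _
  have hxn : x n = g • z0 := rfl
  -- steps of the chain are bounded by M0
  have hstep : ∀ i, i < n → dist (x i) (x (i + 1)) ≤ M0 := by
    intro i hi
    have hpf : prodFrom b 0 (i + 1) = prodFrom b 0 i * b (i + 1) := by
      show prodFrom b 0 i * b (0 + i + 1) = _
      rw [Nat.zero_add]
    show dist ((prodFrom b 0 i) • z0) ((prodFrom b 0 (i + 1)) • z0) ≤ M0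
    rw [hpf, mul_smul, hiso (prodFrom b 0 i) z0 (b (i + 1) • z0), dist_comm]
    exact le_trans (hM (b (i + 1)) (hb (i + 1) (by omega) (by omega))) (le_max_left M 0)
  -- the displacement function along cyclic permutations
  set F : ℕ → ℝ := fun i => dist (g • x i) (x i) with hF
  have hFeq : ∀ i, i ≤ n →
      dist ((prodFrom b i (n - i) * prodFrom b 0 i) • z0) z0 = F i := by
    intro i hi
    have hsp : prodFrom b 0 i * prodFrom b i (n - i) = g := by
      have h2 := prodFrom_add b 0 i (n - i)
      rw [Nat.zero_add] at h2
      rw [hg]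
      rw [show i + (n - i) = n from by omega] at h2
      exact h2.symm
    set u := prodFrom b 0 i with hu
    set v := prodFrom b i (n - i) with hv
    calc dist ((v * u) • z0) z0
        = dist (u • ((v * u) • z0)) (u • z0) := (hiso u _ _).symm
      _ = dist ((u * (v * u)) • z0) (u • z0) := by rw [mul_smul u (v * u) z0]
      _ = dist ((g * u) • z0) (u • z0) := by rw [← mul_assoc, hsp]
      _ = dist (g • (u • z0)) (u • z0) := by rw [mul_smul g u z0]
      _ = F i := rfl
  have hF0 : r ≤ F 0 := by
    have : F 0 = dist (g • z0) z0 := by rw [hF]; simp only [hx0]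
    rw [this, dist_comm]
    exact hr2
  have hFstep : ∀ j, j < n → |F (j + 1) - F j| ≤ 2 * M0 := by
    intro j hj
    have := disp_lip hiso g (x j) (x (j + 1))
    have h2 := hstep j hj
    show |dist (g • x (j + 1)) (x (j + 1)) - dist (g • x j) (x j)| ≤ 2 * M0
    linarith
  -- geodesic from z0 to g•z0 and its midpoint
  obtain ⟨f, hf0, hfd, hfI⟩ := hgeo z0 (g • z0)
  set D := dist z0 (g • z0) with hD
  have hDnn : (0:ℝ) ≤ D := dist_nonneg
  set k := Nat.clog 2 n with hk
  have hn2k : n ≤ 2 ^ k := Nat.le_pow_clog one_lt_two n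
  obtain ⟨i₀, hi₀n, hi₀⟩ := chain_lemma hδ hh hgeo hM0nn k n hn2k x hstep f
    (by rw [hx0]; exact hf0) (by rw [hx0, hxn, ← hD]; exact hfd)
    (by rw [hx0, hxn, ← hD]; exact hfI) (D / 2)
    (by rw [hx0, hxn, ← hD]; exact ⟨by linarith, by linarith⟩)
  have hmp : dist (f (D / 2)) (g • f (D / 2)) ≤ translationLength X g + 8 * δ :=
    midpoint_disp hiso hδ hh z0 g f hf0 hfd hfI
  -- displacement at index i₀ is small
  have hFi₀ : F i₀ ≤ translationLength X g + 8 * δ + 2 * (4 * δ * k + M0) := by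
    have hlip := disp_lip hiso g (f (D / 2)) (x i₀)
    have h1 : dist (g • f (D / 2)) (f (D / 2)) = dist (f (D / 2)) (g • f (D / 2)) :=
      dist_comm _ _
    have h2 : F i₀ - dist (g • f (D / 2)) (f (D / 2)) ≤ 2 * dist (f (D / 2)) (x i₀) :=
      le_trans (le_abs_self _) hlip
    linarith
  -- discrete intermediate value theorem
  set E := 8 * δ + 8 * δ * (k : ℝ) + 2 * M0 with hE
  have hEnn : (0:ℝ) ≤ E := by positivity
  have hFi₀' : F i₀ ≤ r + E := by
    rw [hE]; linarith
  obtain ⟨i, hii₀, habs⟩ := ivt r E (2 * M0) hEnn i₀ F hF0 hFi₀'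
    (fun j hj => hFstep j (lt_of_lt_of_le hj hi₀n))
  have hkc : (0:ℝ) ≤ (k : ℝ) := Nat.cast_nonneg k
  have hmax : max E (2 * M0) = E := max_eq_left (by rw [hE]; nlinarith)
  refine ⟨i, le_trans hii₀ hi₀n, ?_⟩
  rw [hFeq i (le_trans hii₀ hi₀n)]
  have hNn := hN n hn
  rw [← hk] at hNn
  calc |F i - r| ≤ max E (2 * M0) := habs
    _ = E := hmax
    _ ≤ β * n := by rw [hE]; linarith


end BMS
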